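/- Let Γ = (V,A) be a finite connected digraph, let G ≤ Aut(Γ) be vertex-transitive, and suppose Γ is (G,s)-arc-transitive with s ≥ 2. Let N ⊴ G have at least 3 orbits on V. Then there exists a normal subgroup M of G with N ≤ M and M having at least 3 orbits on V, such that: the kernel of the induced action of G on V_M equals M (so G/M acts faithfully on Γ_M); the quotient Γ_M is a connected digraph that is (G/M)-vertex-transitive and (G/M,s)-arc-transitive; and G/M is quasiprimitive or bi-quasiprimitive on V_M. Moreover, if no G-normal quotient of Γ is isomorphic to a directed cycle C_r→ with r ≥ 3, then no (G/M)-normal quotient of Γ_M is isomorphic to a directed cycle C_r→ with r ≥ 3. -/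

import Mathlib

/-!
Statement 0: normal quotients of (G,s)-arc-transitive digraphs (Proposition p:quot(a)).
-/

namespace ArcTransDigraph

variable {V : Type*}

/-- The arc set of a digraph is asymmetric (in particular loopless). -/
def IsDigraph (A : V → V → Prop) : Prop := ∀ u v : V, A u v → ¬ A v u

/-- Connectivity of the underlying undirected graph. -/
def Connected (A : V → V → Prop) : Prop :=
  ∀ u v : V, Relation.ReflTransGen (fun a b => A a b ∨ A b a) u v

/-- `G` consists of automorphisms of the digraph `(V, A)`. -/
def PreservesArcs (A : V → V → Prop) (G : Subgroup (Equiv.Perm V)) : Prop :=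
  ∀ g ∈ G, ∀ u v : V, A u v → A (g u) (g v)

/-- `G` is transitive on vertices. -/
def VertexTransitive (G : Subgroup (Equiv.Perm V)) : Prop :=
  ∀ u v : V, ∃ g ∈ G, g u = v

/-- `p` is an `s`-arc of the digraph with arc set `A`. -/
def IsArcSeq (A : V → V → Prop) (s : ℕ) (p : Fin (s + 1) → V) : Prop :=
  ∀ i : Fin s, A (p i.castSucc) (p i.succ)

/-- `G` is transitive on the `s`-arcs of the digraph with arc set `A`. -/
def ArcTransitive (A : V → V → Prop) (G : Subgroup (Equiv.Perm V)) (s : ℕ) : Prop :=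
  ∀ p q : Fin (s + 1) → V, IsArcSeq A s p → IsArcSeq A s q →
    ∃ g ∈ G, ∀ i : Fin (s + 1), g (p i) = q i

/-- `N` is a subgroup of `G` which is normal in `G`. -/
def NormalIn (N G : Subgroup (Equiv.Perm V)) : Prop :=
  N ≤ G ∧ ∀ g ∈ G, ∀ x ∈ N, g * x * g⁻¹ ∈ N

/-- The `N`-orbit of a vertex, as a point of the orbit space `V_N`. -/
def orbMk (N : Subgroup (Equiv.Perm V)) (v : V) : Quotient (MulAction.orbitRel N V) :=
  Quotient.mk _ v

/-- The arc set of the quotient digraph `Γ_N`. -/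
def quotArc (A : V → V → Prop) (N : Subgroup (Equiv.Perm V)) :
    Quotient (MulAction.orbitRel N V) → Quotient (MulAction.orbitRel N V) → Prop :=
  fun U U' => ∃ u u' : V, orbMk N u = U ∧ orbMk N u' = U' ∧ A u u'

/-- The orbit-relation of the induced action of `M/N` on the `N`-orbit space `V_N`:
two `N`-orbits are related if some element of `M` carries a representative of the first
to a representative of the second.  The quotient `Quot (relOn N M)` is the vertex set of
the quotient digraph `(Γ_N)_{M/N}`. -/
def relOn (N M : Subgroup (Equiv.Perm V)) :
    Quotient (MulAction.orbitRel N V) → Quotient (MulAction.orbitRel N V) → Prop :=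
  fun U U' => ∃ u u' : V, orbMk N u = U ∧ orbMk N u' = U' ∧ ∃ m ∈ M, m u = u'

/-- The arc set of the quotient digraph `(Γ_N)_{M/N}` of `Γ_N`. -/
def quot2Arc (A : V → V → Prop) (N M : Subgroup (Equiv.Perm V)) :
    Quot (relOn N M) → Quot (relOn N M) → Prop :=
  fun W W' => ∃ U U' : Quotient (MulAction.orbitRel N V),
    Quot.mk _ U = W ∧ Quot.mk _ U' = W' ∧ quotArc A N U U'

/-- The digraph with arc set `B` on vertex set `α` is isomorphic to the directed cycle
`C_r→`, whose vertex set is `Z_r` with arcs `(i, i+1)`. -/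
def IsoDirectedCycle {α : Type*} (B : α → α → Prop) (r : ℕ) : Prop :=
  ∃ e : α ≃ ZMod r, ∀ a b : α, B a b ↔ e b = e a + 1

/-! ### Auxiliary lemmas -/

lemma orbitRel_iff (N : Subgroup (Equiv.Perm V)) (u v : V) :
    (MulAction.orbitRel N V) u v ↔ ∃ n ∈ N, n v = u := by
  rw [MulAction.orbitRel_apply, MulAction.mem_orbit_iff]
  constructor
  · rintro ⟨⟨n, hn⟩, h⟩
    exact ⟨n, hn, h⟩
  · rintro ⟨n, hn, h⟩
    exact ⟨⟨n, hn⟩, h⟩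

lemma orbMk_eq_iff (N : Subgroup (Equiv.Perm V)) (u v : V) :
    orbMk N u = orbMk N v ↔ ∃ n ∈ N, n v = u := by
  rw [← orbitRel_iff]
  exact ⟨Quotient.exact, Quotient.sound⟩

lemma orbMk_smul {N : Subgroup (Equiv.Perm V)} {n : Equiv.Perm V} (hn : n ∈ N) (v : V) :
    orbMk N (n v) = orbMk N v :=
  (orbMk_eq_iff N _ v).mpr ⟨n, hn, rfl⟩

lemma orbMk_conj {M G : Subgroup (Equiv.Perm V)} (hM : NormalIn M G) {g m : Equiv.Perm V}
    (hg : g ∈ G) (hm : m ∈ M) (v : V) : orbMk M (g (m v)) = orbMk M (g v) := by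
  refine (orbMk_eq_iff M _ _).mpr ⟨g * m * g⁻¹, hM.2 g hg m hm, ?_⟩
  simp [Equiv.Perm.mul_apply]

lemma orbMk_map {M G : Subgroup (Equiv.Perm V)} (hM : NormalIn M G) {g : Equiv.Perm V}
    (hg : g ∈ G) {u v : V} (h : orbMk M u = orbMk M v) :
    orbMk M (g u) = orbMk M (g v) := by
  obtain ⟨m, hm, hmv⟩ := (orbMk_eq_iff M u v).mp h
  rw [← hmv]
  exact orbMk_conj hM hg hm v

/-- Extend a 2-arc forwards to an `s`-arc. -/
lemma exists_arcseq_extending {A : V → V → Prop} (hout : ∀ v, ∃ w, A v w)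
    {s : ℕ} (hs : 2 ≤ s) {a b c : V} (hab : A a b) (hbc : A b c) :
    ∃ P : Fin (s + 1) → V, IsArcSeq A s P ∧
      P ⟨0, by omega⟩ = a ∧ P ⟨1, by omega⟩ = b ∧ P ⟨2, by omega⟩ = c := by
  choose nxt hnxt using hout
  let f : ℕ → V := fun n => match n with
    | 0 => a
    | 1 => b
    | (k+2) => nxt^[k] c
  have hf : ∀ n, A (f n) (f (n + 1)) := by
    intro n
    match n with
    | 0 => exact hab
    | 1 => exact hbc
    | (k+2) =>
      show A (nxt^[k] c) (nxt^[k+1] c)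
      rw [Function.iterate_succ_apply']
      exact hnxt _
  exact ⟨fun i => f i.val, fun i => hf i.val, rfl, rfl, rfl⟩

/-- Lift an `n`-arc of the quotient digraph to an `n`-arc of the original digraph. -/
lemma lift_arcseq {A : V → V → Prop} {G M : Subgroup (Equiv.Perm V)}
    (hAut : PreservesArcs A G) (hMG : M ≤ G) :
    ∀ (n : ℕ) (p : Fin (n + 1) → Quotient (MulAction.orbitRel M V)),
      IsArcSeq (quotArc A M) n p →
      ∃ P : Fin (n + 1) → V, IsArcSeq A n P ∧ ∀ i, orbMk M (P i) = p i := by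
  intro n
  induction n with
  | zero =>
    intro p _
    obtain ⟨v, hv⟩ := Quotient.exists_rep (p 0)
    refine ⟨fun _ => v, fun i => i.elim0, fun i => ?_⟩
    have hi : i = 0 := Fin.fin_one_eq_zero i
    rw [hi]
    exact hv
  | succ n ih =>
    intro p hp
    obtain ⟨P, hP, hPp⟩ := ih (fun i => p i.castSucc)
      (fun i => by have := hp i.castSucc; rwa [Fin.succ_castSucc] at this)
    obtain ⟨u, u', hu, hu', huu'⟩ := hp (Fin.last n)
    have h1 : orbMk M (P (Fin.last n)) = orbMk M u := by
      rw [hPp (Fin.last n), ← hu]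
    obtain ⟨m, hm, hmu⟩ := (orbMk_eq_iff M _ u).mp h1
    refine ⟨Fin.snoc P (m u'), ?_, ?_⟩
    · intro i
      induction i using Fin.lastCases with
      | last =>
        rw [Fin.succ_last, Fin.snoc_last, Fin.snoc_castSucc, ← hmu]
        exact hAut m (hMG hm) u u' huu'
      | cast j =>
        rw [Fin.succ_castSucc, Fin.snoc_castSucc, Fin.snoc_castSucc]
        exact hP j
    · intro i
      induction i using Fin.lastCases with
      | last =>
        rw [Fin.snoc_last, ← Fin.succ_last, orbMk_smul hm, hu']
      | cast j =>
        rw [Fin.snoc_castSucc]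
        exact hPp j

theorem exists_quasiprimitive_or_biquasiprimitive_quotient
    [Finite V] (A : V → V → Prop) (G N : Subgroup (Equiv.Perm V)) (s : ℕ)
    (hdig : IsDigraph A) (hconn : Connected A) (hAut : PreservesArcs A G)
    (hvt : VertexTransitive G) (hs : 2 ≤ s) (hat : ArcTransitive A G s)
    (hN : NormalIn N G)
    (horbN : 3 ≤ Nat.card (Quotient (MulAction.orbitRel N V))) :
    ∃ M : Subgroup (Equiv.Perm V), NormalIn M G ∧ N ≤ M ∧
      3 ≤ Nat.card (Quotient (MulAction.orbitRel M V)) ∧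
      -- the kernel of the induced action of G on V_M is exactly M
      (∀ g ∈ G, ((∀ v : V, orbMk M (g v) = orbMk M v) ↔ g ∈ M)) ∧
      -- Γ_M is a connected digraph
      IsDigraph (quotArc A M) ∧ Connected (quotArc A M) ∧
      -- the induced action of G/M is vertex-transitive on Γ_M
      (∀ U U' : Quotient (MulAction.orbitRel M V),
        ∃ g ∈ G, ∀ u : V, orbMk M u = U → orbMk M (g u) = U') ∧
      -- the induced action of G/M is transitive on the s-arcs of Γ_M
      (∀ p q : Fin (s + 1) → Quotient (MulAction.orbitRel M V),
        IsArcSeq (quotArc A M) s p → IsArcSeq (quotArc A M) s q →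
        ∃ g ∈ G, ∀ (i : Fin (s + 1)) (u : V), orbMk M u = p i → orbMk M (g u) = q i) ∧
      -- G/M is quasiprimitive or bi-quasiprimitive on V_M: its nontrivial normal
      -- subgroups are the L/M with M < L ⊴ G, and for M ≤ L the L-orbits on V_M
      -- correspond to the L-orbits on V
      ((∀ L : Subgroup (Equiv.Perm V), NormalIn L G → M ≤ L → M ≠ L →
          (∀ u v : V, ∃ l ∈ L, l u = v)) ∨
        ((∀ L : Subgroup (Equiv.Perm V), NormalIn L G → M ≤ L → M ≠ L →
            Nat.card (Quotient (MulAction.orbitRel L V)) ≤ 2) ∧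
          (∃ L : Subgroup (Equiv.Perm V), NormalIn L G ∧ M ≤ L ∧
            Nat.card (Quotient (MulAction.orbitRel L V)) = 2))) ∧
      -- moreover, if no G-normal quotient of Γ is a directed cycle C_r→ (r ≥ 3), then
      -- no (G/M)-normal quotient of Γ_M is a directed cycle C_r→ (r ≥ 3)
      ((∀ r : ℕ, 3 ≤ r → ∀ M' : Subgroup (Equiv.Perm V), NormalIn M' G →
          (¬ ∀ u v : V, ∃ m ∈ M', m u = v) → ¬ IsoDirectedCycle (quotArc A M') r) →
        (∀ r : ℕ, 3 ≤ r → ∀ M' : Subgroup (Equiv.Perm V), M ≤ M' → NormalIn M' G →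
          (¬ ∀ u v : V, ∃ m ∈ M', m u = v) →
          ¬ IsoDirectedCycle (quot2Arc A M M') r)) := by
  classical
  -- choose a maximal normal subgroup `M` containing `N` with at least 3 orbits
  obtain ⟨M, ⟨hMnorm, hNM, hM3⟩, hmax⟩ :
      ∃ M : Subgroup (Equiv.Perm V),
        (NormalIn M G ∧ N ≤ M ∧ 3 ≤ Nat.card (Quotient (MulAction.orbitRel M V))) ∧
        ∀ M' : Subgroup (Equiv.Perm V),
          (NormalIn M' G ∧ N ≤ M' ∧ 3 ≤ Nat.card (Quotient (MulAction.orbitRel M' V))) →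
          M ≤ M' → M = M' := by
    obtain ⟨M, hM, hm⟩ := Set.Finite.exists_maximalFor (id : Subgroup (Equiv.Perm V) → _)
      {M : Subgroup (Equiv.Perm V) |
        NormalIn M G ∧ N ≤ M ∧ 3 ≤ Nat.card (Quotient (MulAction.orbitRel M V))}
      (Set.toFinite _) ⟨N, hN, le_refl N, horbN⟩
    exact ⟨M, hM, fun M' h' hle => le_antisymm hle (hm h' hle)⟩
  have hMG : M ≤ G := hMnorm.1
  -- basic consequences
  have hVne : Nonempty V := by
    have h0 : 0 < Nat.card (Quotient (MulAction.orbitRel M V)) := by omega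
    have hne : Nonempty (Quotient (MulAction.orbitRel M V)) := by
      rcases Nat.card_pos_iff.mp h0 with ⟨h, _⟩
      exact h
    obtain ⟨U⟩ := hne
    obtain ⟨v, -⟩ := Quotient.exists_rep U
    exact ⟨v⟩
  have hexarc : ∃ a b : V, A a b := by
    have h1 : 1 < Nat.card (Quotient (MulAction.orbitRel M V)) := by omega
    have hnt : Nontrivial (Quotient (MulAction.orbitRel M V)) :=
      Finite.one_lt_card_iff_nontrivial.mp h1
    obtain ⟨U, U', hUU'⟩ := hnt
    obtain ⟨u, hu⟩ := Quotient.exists_rep U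
    obtain ⟨u', hu'⟩ := Quotient.exists_rep U'
    have huv : u ≠ u' := by
      rintro rfl
      exact hUU' (hu.symm.trans hu')
    rcases (hconn u u').cases_head with h | ⟨c, hc, -⟩
    · exact absurd h huv
    · rcases hc with h | h
      exacts [⟨u, c, h⟩, ⟨c, u, h⟩]
  have hout : ∀ v : V, ∃ w, A v w := by
    intro v
    obtain ⟨a, b, hab⟩ := hexarc
    obtain ⟨g, hg, hga⟩ := hvt a v
    exact ⟨g b, by rw [← hga]; exact hAut g hg a b hab⟩
  have hin : ∀ v : V, ∃ w, A w v := by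
    intro v
    obtain ⟨a, b, hab⟩ := hexarc
    obtain ⟨g, hg, hgb⟩ := hvt b v
    exact ⟨g a, by rw [← hgb]; exact hAut g hg a b hab⟩
  -- the crucial fact: no 2-arc has both endpoints in the same M-orbit
  have h2 : ¬ ∃ a b c : V, A a b ∧ A b c ∧ orbMk M a = orbMk M c := by
    rintro ⟨a, b, c, hab, hbc, hac⟩
    -- every 2-arc has its endpoints in the same M-orbit
    have key : ∀ x y z : V, A x y → A y z → orbMk M x = orbMk M z := by
      intro x y z hxy hyz
      obtain ⟨m, hm, hma⟩ := (orbMk_eq_iff M c a).mp hac.symm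
      obtain ⟨P, hP, hP0, hP1, hP2⟩ := exists_arcseq_extending hout hs hab hbc
      obtain ⟨Q, hQ, hQ0, hQ1, hQ2⟩ := exists_arcseq_extending hout hs hxy hyz
      obtain ⟨g, hg, hgPQ⟩ := hat P Q hP hQ
      have hga : g a = x := by rw [← hP0, hgPQ, hQ0]
      have hgc : g c = z := by rw [← hP2, hgPQ, hQ2]
      have : orbMk M z = orbMk M x := by
        rw [← hgc, ← hga, ← hma]
        exact orbMk_conj hMnorm hg hm a
      exact this.symm
    -- composition of arcs through a common M-orbit
    have T : ∀ x y y' z : V, A x y → A y' z → orbMk M y = orbMk M y' →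
        orbMk M x = orbMk M z := by
      intro x y y' z hxy hy'z hyy'
      obtain ⟨m, hm, hmy'⟩ := (orbMk_eq_iff M y y').mp hyy'
      have harc : A y (m z) := by
        rw [← hmy']
        exact hAut m (hMG hm) y' z hy'z
      have := key x y (m z) hxy harc
      rwa [orbMk_smul hm] at this
    obtain ⟨a₀, b₀, hab₀⟩ := hexarc
    have hstep : ∀ v w : V,
        (orbMk M v = orbMk M a₀ ∨ orbMk M v = orbMk M b₀) → (A v w ∨ A w v) →
        (orbMk M w = orbMk M a₀ ∨ orbMk M w = orbMk M b₀) := by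
      intro v w hv harc
      rcases hv with hv | hv
      · rcases harc with h | h
        · obtain ⟨t, ht⟩ := hin v
          have h1 : orbMk M t = orbMk M b₀ := T t v a₀ b₀ ht hab₀ hv
          have h2' : orbMk M t = orbMk M w := key t v w ht h
          exact Or.inr (h2'.symm.trans h1)
        · exact Or.inr (T w v a₀ b₀ h hab₀ hv)
      · rcases harc with h | h
        · exact Or.inl ((T a₀ b₀ v w hab₀ h hv.symm).symm)
        · obtain ⟨z', hz'⟩ := hout v
          have h1 : orbMk M z' = orbMk M a₀ := (T a₀ b₀ v z' hab₀ hz' hv.symm).symm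
          have h2' : orbMk M w = orbMk M z' := key w v z' h hz'
          exact Or.inl (h2'.trans h1)
    have hall : ∀ v : V, orbMk M v = orbMk M a₀ ∨ orbMk M v = orbMk M b₀ := by
      intro v
      have hpath := hconn a₀ v
      induction hpath with
      | refl => exact Or.inl rfl
      | tail _ hbc ih => exact hstep _ _ ih hbc
    have hsurj : Function.Surjective
        (fun x : Bool => if x then orbMk M a₀ else orbMk M b₀) := by
      intro U
      obtain ⟨v, hv⟩ := Quotient.exists_rep U
      rcases hall v with h | h
      · exact ⟨true, by simpa using h.symm.trans hv⟩
      · exact ⟨false, by simpa using h.symm.trans hv⟩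
    have hcard2 : Nat.card (Quotient (MulAction.orbitRel M V)) ≤ 2 := by
      have := Nat.card_le_card_of_surjective _ hsurj
      simpa using this
    omega
  -- Γ_M is a digraph
  have hdigM : IsDigraph (quotArc A M) := by
    rintro U U' ⟨u, u', hu, hu', huu'⟩ ⟨w', w, hw', hw, hww'⟩
    apply h2
    have h3 : orbMk M u' = orbMk M w' := by rw [hu', hw']
    obtain ⟨m, hm, hmw'⟩ := (orbMk_eq_iff M u' w').mp h3
    refine ⟨u, u', m w, huu', ?_, ?_⟩
    · rw [← hmw']
      exact hAut m (hMG hm) w' w hww'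
    · rw [orbMk_smul hm, hu, hw]
  -- Γ_M is connected
  have hconnM : Connected (quotArc A M) := by
    intro U U'
    obtain ⟨u, hu⟩ := Quotient.exists_rep U
    obtain ⟨u', hu'⟩ := Quotient.exists_rep U'
    rw [← hu, ← hu']
    exact Relation.ReflTransGen.lift (orbMk M)
      (fun a b (h : A a b ∨ A b a) => h.imp (fun h => ⟨a, b, rfl, rfl, h⟩) (fun h => ⟨b, a, rfl, rfl, h⟩))
      _ _ (hconn u u')
  -- kernel of the action of G on V_M
  have hker : ∀ g ∈ G, ((∀ v : V, orbMk M (g v) = orbMk M v) ↔ g ∈ M) := by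
    intro g hg
    constructor
    · intro hfix
      set K : Subgroup (Equiv.Perm V) :=
        { carrier := {k | k ∈ G ∧ ∀ v : V, orbMk M (k v) = orbMk M v}
          one_mem' := ⟨G.one_mem, fun v => rfl⟩
          mul_mem' := fun {a b} ha hb =>
            ⟨G.mul_mem ha.1 hb.1, fun v => by
              rw [Equiv.Perm.mul_apply, ha.2, hb.2]⟩
          inv_mem' := fun {a} ha =>
            ⟨G.inv_mem ha.1, fun v => by
              have := ha.2 (a⁻¹ v)
              rw [show a (a⁻¹ v) = v from Equiv.apply_symm_apply a v] at this
              exact this.symm⟩ } with hK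
      have hKmem : ∀ k : Equiv.Perm V,
          k ∈ K ↔ k ∈ G ∧ ∀ v : V, orbMk M (k v) = orbMk M v := fun k => Iff.rfl
      have hKnorm : NormalIn K G := by
        refine ⟨fun k hk => ((hKmem k).mp hk).1, ?_⟩
        intro x hx k hk
        obtain ⟨hkG, hkfix⟩ := (hKmem k).mp hk
        refine (hKmem _).mpr ⟨G.mul_mem (G.mul_mem hx hkG) (G.inv_mem hx), fun v => ?_⟩
        show orbMk M (x (k (x⁻¹ v))) = orbMk M v
        obtain ⟨m, hm, hmv⟩ := (orbMk_eq_iff M _ _).mp (hkfix (x⁻¹ v))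
        rw [← hmv]
        have := orbMk_conj hMnorm hx hm (x⁻¹ v)
        rwa [show x (x⁻¹ v) = v from Equiv.apply_symm_apply x v] at this
      have hMK : M ≤ K := fun m hm => (hKmem m).mpr ⟨hMG hm, fun v => orbMk_smul hm v⟩
      have hrel : ∀ a b : V,
          (MulAction.orbitRel K V) a b ↔ (MulAction.orbitRel M V) a b := by
        intro a b
        rw [orbitRel_iff, orbitRel_iff]
        constructor
        · rintro ⟨k, hk, hkb⟩
          obtain ⟨hkG, hkfix⟩ := (hKmem k).mp hk
          obtain ⟨m, hm, hmb⟩ := (orbMk_eq_iff M _ _).mp (hkfix b)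
          exact ⟨m, hm, by rw [hmb, hkb]⟩
        · rintro ⟨m, hm, hmb⟩
          exact ⟨m, hMK hm, hmb⟩
      have hcardK : 3 ≤ Nat.card (Quotient (MulAction.orbitRel K V)) := by
        rw [Nat.card_congr (Quotient.congrRight hrel)]
        exact hM3
      have hKM : M = K := hmax K ⟨hKnorm, le_trans hNM hMK, hcardK⟩ hMK
      rw [hKM]
      exact (hKmem g).mpr ⟨hg, hfix⟩
    · intro hm v
      exact orbMk_smul hm v
  -- vertex transitivity on V_M
  have hvtM : ∀ U U' : Quotient (MulAction.orbitRel M V),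
      ∃ g ∈ G, ∀ u : V, orbMk M u = U → orbMk M (g u) = U' := by
    intro U U'
    obtain ⟨u₀, hu₀⟩ := Quotient.exists_rep U
    obtain ⟨u₀', hu₀'⟩ := Quotient.exists_rep U'
    obtain ⟨g, hg, hgu⟩ := hvt u₀ u₀'
    refine ⟨g, hg, fun u hu => ?_⟩
    have h1 : orbMk M u = orbMk M u₀ := by rw [hu, ← hu₀]; rfl
    have h2' := orbMk_map hMnorm hg h1
    rw [h2', hgu]
    exact hu₀'
  -- s-arc transitivity on Γ_M
  have hatM : ∀ p q : Fin (s + 1) → Quotient (MulAction.orbitRel M V),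
      IsArcSeq (quotArc A M) s p → IsArcSeq (quotArc A M) s q →
      ∃ g ∈ G, ∀ (i : Fin (s + 1)) (u : V), orbMk M u = p i → orbMk M (g u) = q i := by
    intro p q hp hq
    obtain ⟨P, hP, hPp⟩ := lift_arcseq hAut hMG s p hp
    obtain ⟨Q, hQ, hQq⟩ := lift_arcseq hAut hMG s q hq
    obtain ⟨g, hg, hgPQ⟩ := hat P Q hP hQ
    refine ⟨g, hg, fun i u hu => ?_⟩
    have h1 : orbMk M u = orbMk M (P i) := by rw [hu, ← hPp i]
    have h2' := orbMk_map hMnorm hg h1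
    rw [h2', hgPQ i, hQq i]
  -- quasiprimitive or bi-quasiprimitive
  have horb_le : ∀ L : Subgroup (Equiv.Perm V), NormalIn L G → M ≤ L → M ≠ L →
      Nat.card (Quotient (MulAction.orbitRel L V)) ≤ 2 := by
    intro L hL hML hne
    by_contra hgt
    exact hne (hmax L ⟨hL, le_trans hNM hML, by omega⟩ hML)
  have hdich : (∀ L : Subgroup (Equiv.Perm V), NormalIn L G → M ≤ L → M ≠ L →
        (∀ u v : V, ∃ l ∈ L, l u = v)) ∨
      ((∀ L : Subgroup (Equiv.Perm V), NormalIn L G → M ≤ L → M ≠ L →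
          Nat.card (Quotient (MulAction.orbitRel L V)) ≤ 2) ∧
        (∃ L : Subgroup (Equiv.Perm V), NormalIn L G ∧ M ≤ L ∧
          Nat.card (Quotient (MulAction.orbitRel L V)) = 2)) := by
    by_cases hq : ∀ L : Subgroup (Equiv.Perm V), NormalIn L G → M ≤ L → M ≠ L →
        (∀ u v : V, ∃ l ∈ L, l u = v)
    · exact Or.inl hq
    · push_neg at hq
      obtain ⟨L, hL, hML, hMneL, u, v, huv⟩ := hq
      refine Or.inr ⟨horb_le, L, hL, hML, ?_⟩
      have hle := horb_le L hL hML hMneL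
      have hpos : 0 < Nat.card (Quotient (MulAction.orbitRel L V)) := by
        have : Nonempty (Quotient (MulAction.orbitRel L V)) :=
          ⟨Quotient.mk _ hVne.some⟩
        exact Nat.card_pos
      have hne1 : Nat.card (Quotient (MulAction.orbitRel L V)) ≠ 1 := by
        intro h1
        have hsub : Subsingleton (Quotient (MulAction.orbitRel L V)) :=
          (Nat.card_eq_one_iff_unique.mp h1).1
        have : orbMk L v = orbMk L u := Subsingleton.elim _ _
        obtain ⟨l, hl, hlv⟩ := (orbMk_eq_iff L v u).mp this
        exact huv l hl hlv
      omega
  -- the directed-cycle condition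
  have hdq : ∀ M' : Subgroup (Equiv.Perm V), M ≤ M' →
      ∃ e : Quot (relOn M M') ≃ Quotient (MulAction.orbitRel M' V),
        ∀ u : V, e (Quot.mk _ (orbMk M u)) = orbMk M' u := by
    intro M' hMM'
    have hc1 : ∀ a b : V, (MulAction.orbitRel M V) a b → orbMk M' a = orbMk M' b := by
      intro a b hab
      obtain ⟨m, hm, hmb⟩ := (orbitRel_iff M a b).mp hab
      exact (orbMk_eq_iff M' a b).mpr ⟨m, hMM' hm, hmb⟩
    have hc2 : ∀ U U' : Quotient (MulAction.orbitRel M V), relOn M M' U U' →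
        Quotient.lift (fun v : V => orbMk M' v) hc1 U =
        Quotient.lift (fun v : V => orbMk M' v) hc1 U' := by
      rintro U U' ⟨u, u', hu, hu', m, hm, hmu⟩
      subst hu; subst hu'
      show orbMk M' u = orbMk M' u'
      refine (orbMk_eq_iff M' u u').mpr ⟨m⁻¹, M'.inv_mem hm, ?_⟩
      rw [← hmu]
      exact Equiv.symm_apply_apply m u
    have hc3 : ∀ a b : V, (MulAction.orbitRel M' V) a b →
        Quot.mk (relOn M M') (orbMk M a) = Quot.mk (relOn M M') (orbMk M b) := by
      intro a b hab
      obtain ⟨m, hm, hmb⟩ := (orbitRel_iff M' a b).mp hab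
      refine Quot.sound ⟨a, b, rfl, rfl, m⁻¹, M'.inv_mem hm, ?_⟩
      rw [← hmb]
      exact Equiv.symm_apply_apply m b
    refine ⟨⟨Quot.lift (Quotient.lift (fun v : V => orbMk M' v) hc1) hc2,
      Quotient.lift (fun v : V => Quot.mk (relOn M M') (orbMk M v)) hc3, ?_, ?_⟩,
      fun u => rfl⟩
    · intro W
      induction W using Quot.ind with
      | mk U =>
        induction U using Quotient.ind with
        | _ v => rfl
    · intro X
      induction X using Quotient.ind with
      | _ v => rfl
  refine ⟨M, hMnorm, hNM, hM3, hker, hdigM, hconnM, hvtM, hatM, hdich, ?_⟩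
  intro hG r hr M' hMM' hM'norm hntrans hiso
  obtain ⟨e2, he2⟩ := hiso
  obtain ⟨e, he⟩ := hdq M' hMM'
  apply hG r hr M' hM'norm hntrans
  refine ⟨e.symm.trans e2, fun a b => ?_⟩
  have harc : ∀ W W' : Quot (relOn M M'),
      quot2Arc A M M' W W' ↔ quotArc A M' (e W) (e W') := by
    intro W W'
    constructor
    · rintro ⟨U, U', hU, hU', u, u', hu, hu', huu'⟩
      subst hu; subst hu'; subst hU; subst hU'
      rw [he u, he u']
      exact ⟨u, u', rfl, rfl, huu'⟩
    · rintro ⟨u, u', hu, hu', huu'⟩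
      refine ⟨orbMk M u, orbMk M u', ?_, ?_, u, u', rfl, rfl, huu'⟩
      · exact e.injective ((he u).trans hu)
      · exact e.injective ((he u').trans hu')
  have h1 : quotArc A M' a b ↔ quot2Arc A M M' (e.symm a) (e.symm b) := by
    rw [harc (e.symm a) (e.symm b), e.apply_symm_apply, e.apply_symm_apply]
  rw [h1, he2 (e.symm a) (e.symm b)]
  rfl

end ArcTransDigraph
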